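/- arXiv:2010.08122 — 3 statements merged into one kernel-verified Lean document; each statement's English description precedes it below -/
import Mathlib

section
/- Let $r_1,\ldots,r_m$ be reals with $r_i < 1$, $r_i \neq 0$, and let $s_i = r_i/(r_i - 1)$. Let $r < 1$, $r \neq 0$, and $s = r/(r-1)$. For vectors $x_i, y_i \in \mathbb{R}^{n_i}$ with positive entries ($i = 1,\ldots,m$), define $X_i = \|x_i\|_{r_i}$ and $Y_i = \|y_i\|_{s_i}$. Then $\sum_{i=1}^m x_i \cdot y_i \geq \left(\sum_{i=1}^m X_i^r\right)^{1/r} \left(\sum_{i=1}^m Y_i^s\right)^{1/s}$. -/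
open Finset

/-- Reverse Hölder inequality for `0 < p < 1`. -/
lemma rev_holder_pos {ι : Type*} (t : Finset ι) (p q : ℝ) (hp0 : 0 < p) (hp1 : p < 1)
    (hq : q = p / (p - 1)) (f g : ι → ℝ) (hf : ∀ i ∈ t, 0 < f i) (hg : ∀ i ∈ t, 0 < g i) :
    (∑ i ∈ t, f i ^ p) ^ (1 / p) * (∑ i ∈ t, g i ^ q) ^ (1 / q) ≤ ∑ i ∈ t, f i * g i := by
  have hq0' : q ≠ 0 := by
    rw [hq]; exact div_ne_zero hp0.ne' (by linarith)
  rcases t.eq_empty_or_nonempty with rfl | hne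
  · simp only [Finset.sum_empty]
    rw [Real.zero_rpow (one_div_ne_zero hp0.ne'), zero_mul]
  have hq0 : q < 0 := by
    rw [hq]; exact div_neg_of_pos_of_neg hp0 (by linarith)
  have hP : Real.HolderConjugate (1 / p) (1 / (1 - p)) := by
    rw [Real.holderConjugate_iff]; constructor
    · rw [lt_div_iff₀ hp0]; linarith
    · rw [one_div, one_div, inv_inv, inv_inv]; ring
  have hgq : 0 < ∑ i ∈ t, g i ^ q :=
    Finset.sum_pos (fun i hi => Real.rpow_pos_of_pos (hg i hi) q) hne
  have hfg : 0 < ∑ i ∈ t, f i * g i :=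
    Finset.sum_pos (fun i hi => mul_pos (hf i hi) (hg i hi)) hne
  have hfp : (0:ℝ) ≤ ∑ i ∈ t, f i ^ p :=
    Finset.sum_nonneg fun i hi => (Real.rpow_pos_of_pos (hf i hi) p).le
  -- apply Hölder with u = (f g)^p, v = g^(-p)
  have key : ∑ i ∈ t, f i ^ p ≤ (∑ i ∈ t, f i * g i) ^ p * (∑ i ∈ t, g i ^ q) ^ (1 - p) := by
    have h := Real.inner_le_Lp_mul_Lq_of_nonneg (s := t) hP
      (f := fun i => (f i * g i) ^ p) (g := fun i => g i ^ (-p))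
      (fun i hi => (Real.rpow_pos_of_pos (mul_pos (hf i hi) (hg i hi)) p).le)
      (fun i hi => (Real.rpow_pos_of_pos (hg i hi) (-p)).le)
    have e1 : ∑ i ∈ t, (f i * g i) ^ p * g i ^ (-p) = ∑ i ∈ t, f i ^ p := by
      refine Finset.sum_congr rfl fun i hi => ?_
      rw [Real.mul_rpow (hf i hi).le (hg i hi).le, mul_assoc,
        ← Real.rpow_add (hg i hi), add_neg_cancel, Real.rpow_zero, mul_one]
    have e2 : ∑ i ∈ t, ((f i * g i) ^ p) ^ (1 / p) = ∑ i ∈ t, f i * g i := by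
      refine Finset.sum_congr rfl fun i hi => ?_
      rw [← Real.rpow_mul (mul_pos (hf i hi) (hg i hi)).le, mul_one_div,
        div_self hp0.ne', Real.rpow_one]
    have e3 : ∑ i ∈ t, (g i ^ (-p)) ^ (1 / (1 - p)) = ∑ i ∈ t, g i ^ q := by
      refine Finset.sum_congr rfl fun i hi => ?_
      rw [← Real.rpow_mul (hg i hi).le]
      congr 1
      have h1 : (1:ℝ) - p ≠ 0 := by linarith
      have h2 : p - 1 ≠ 0 := by intro h; linarith
      rw [hq]; field_simp; ring
    rw [e1, e2, e3] at h
    have hd1 : 1 / (1 / p) = p := one_div_one_div p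
    have hd2 : 1 / (1 / (1 - p)) = 1 - p := one_div_one_div (1 - p)
    rw [hd1, hd2] at h
    exact h
  have step : (∑ i ∈ t, f i ^ p) ^ (1 / p) ≤
      (∑ i ∈ t, f i * g i) * (∑ i ∈ t, g i ^ q) ^ ((1 - p) / p) := by
    calc (∑ i ∈ t, f i ^ p) ^ (1 / p)
        ≤ ((∑ i ∈ t, f i * g i) ^ p * (∑ i ∈ t, g i ^ q) ^ (1 - p)) ^ (1 / p) :=
          Real.rpow_le_rpow hfp key (by positivity)
      _ = (∑ i ∈ t, f i * g i) * (∑ i ∈ t, g i ^ q) ^ ((1 - p) / p) := by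
          rw [Real.mul_rpow (by positivity) (by positivity),
            ← Real.rpow_mul hfg.le, ← Real.rpow_mul hgq.le, mul_one_div,
            div_self hp0.ne', Real.rpow_one, mul_one_div]
  calc (∑ i ∈ t, f i ^ p) ^ (1 / p) * (∑ i ∈ t, g i ^ q) ^ (1 / q)
      ≤ ((∑ i ∈ t, f i * g i) * (∑ i ∈ t, g i ^ q) ^ ((1 - p) / p)) *
          (∑ i ∈ t, g i ^ q) ^ (1 / q) := by
        apply mul_le_mul_of_nonneg_right step (by positivity)
    _ = (∑ i ∈ t, f i * g i) *
          ((∑ i ∈ t, g i ^ q) ^ ((1 - p) / p) * (∑ i ∈ t, g i ^ q) ^ (1 / q)) := by ring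
    _ = ∑ i ∈ t, f i * g i := by
        rw [← Real.rpow_add hgq]
        have : (1 - p) / p + 1 / q = 0 := by
          rw [hq]; field_simp; ring
        rw [this, Real.rpow_zero, mul_one]

/-- Reverse Hölder inequality for `p < 1`, `p ≠ 0`. -/
lemma rev_holder {ι : Type*} (t : Finset ι) (p q : ℝ) (hp1 : p < 1) (hp0 : p ≠ 0)
    (hq : q = p / (p - 1)) (f g : ι → ℝ) (hf : ∀ i ∈ t, 0 < f i) (hg : ∀ i ∈ t, 0 < g i) :
    (∑ i ∈ t, f i ^ p) ^ (1 / p) * (∑ i ∈ t, g i ^ q) ^ (1 / q) ≤ ∑ i ∈ t, f i * g i := by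
  rcases lt_or_gt_of_ne hp0 with hneg | hpos
  · -- p < 0, so 0 < q < 1 and q/(q-1) = p
    have hq0 : 0 < q := by
      rw [hq]; exact div_pos_of_neg_of_neg hneg (by linarith)
    have hq1 : q < 1 := by
      rw [hq, div_lt_one_of_neg (by linarith : p - 1 < 0)]
      linarith
    have h1 : p - 1 ≠ 0 := by intro h; linarith
    have hq1' : q - 1 = 1 / (p - 1) := by
      rw [hq]; field_simp; ring
    have hp' : p = q / (q - 1) := by
      rw [hq1', hq]; field_simp
    have h := rev_holder_pos t q p hq0 hq1 hp' g f hg hf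
    calc (∑ i ∈ t, f i ^ p) ^ (1 / p) * (∑ i ∈ t, g i ^ q) ^ (1 / q)
        = (∑ i ∈ t, g i ^ q) ^ (1 / q) * (∑ i ∈ t, f i ^ p) ^ (1 / p) := mul_comm _ _
      _ ≤ ∑ i ∈ t, g i * f i := h
      _ = ∑ i ∈ t, f i * g i := Finset.sum_congr rfl fun i _ => mul_comm _ _
  · exact rev_holder_pos t p q hpos hp1 hq f g hf hg

theorem holder_direct_sum (m : ℕ) (n : Fin m → ℕ) (rr : Fin m → ℝ)
    (hrr : ∀ i, rr i < 1) (hrr0 : ∀ i, rr i ≠ 0)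
    (ss : Fin m → ℝ) (hss : ∀ i, ss i = rr i / (rr i - 1))
    (r : ℝ) (hr : r < 1) (hr0 : r ≠ 0) (s : ℝ) (hs : s = r / (r - 1))
    (x y : (i : Fin m) → Fin (n i) → ℝ)
    (hx : ∀ i j, 0 < x i j) (hy : ∀ i j, 0 < y i j) :
    (∑ i, ((∑ j, x i j ^ rr i) ^ (1 / rr i)) ^ r) ^ (1 / r) *
      (∑ i, ((∑ j, y i j ^ ss i) ^ (1 / ss i)) ^ s) ^ (1 / s)
      ≤ ∑ i, ∑ j, x i j * y i j := by
  set X : Fin m → ℝ := fun i => (∑ j, x i j ^ rr i) ^ (1 / rr i) with hX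
  set Y : Fin m → ℝ := fun i => (∑ j, y i j ^ ss i) ^ (1 / ss i) with hY
  set S : Finset (Fin m) := Finset.univ.filter (fun i => 0 < n i) with hS
  have hXpos : ∀ i ∈ S, 0 < X i := by
    intro i hi
    simp only [hS, Finset.mem_filter] at hi
    have : Nonempty (Fin (n i)) := Fin.pos_iff_nonempty.mp hi.2
    exact Real.rpow_pos_of_pos
      (Finset.sum_pos (fun j _ => Real.rpow_pos_of_pos (hx i j) _) Finset.univ_nonempty) _
  have hYpos : ∀ i ∈ S, 0 < Y i := by
    intro i hi
    simp only [hS, Finset.mem_filter] at hi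
    have : Nonempty (Fin (n i)) := Fin.pos_iff_nonempty.mp hi.2
    exact Real.rpow_pos_of_pos
      (Finset.sum_pos (fun j _ => Real.rpow_pos_of_pos (hy i j) _) Finset.univ_nonempty) _
  have hXzero : ∀ i ∉ S, X i ^ r = 0 := by
    intro i hi
    simp only [hS, Finset.mem_filter, Finset.mem_univ, true_and, not_lt,
      Nat.le_zero] at hi
    haveI : IsEmpty (Fin (n i)) := by rw [hi]; infer_instance
    have hXi : X i = 0 := by
      rw [hX]
      simp only [Finset.univ_eq_empty, Finset.sum_empty]
      exact Real.zero_rpow (one_div_ne_zero (hrr0 i))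
    rw [hXi, Real.zero_rpow hr0]
  have hYzero : ∀ i ∉ S, Y i ^ s = 0 := by
    intro i hi
    simp only [hS, Finset.mem_filter, Finset.mem_univ, true_and, not_lt,
      Nat.le_zero] at hi
    haveI : IsEmpty (Fin (n i)) := by rw [hi]; infer_instance
    have hssne : ss i ≠ 0 := by
      rw [hss i]
      exact div_ne_zero (hrr0 i) (by have := hrr i; intro h; apply hrr0 i; linarith)
    have hYi : Y i = 0 := by
      rw [hY]
      simp only [Finset.univ_eq_empty, Finset.sum_empty]
      exact Real.zero_rpow (one_div_ne_zero hssne)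
    rw [hYi, Real.zero_rpow (by rw [hs]; exact div_ne_zero hr0 (by intro h; apply hr0; linarith))]
  have eX : ∑ i, X i ^ r = ∑ i ∈ S, X i ^ r :=
    (Finset.sum_subset (Finset.subset_univ S) (fun i _ hi => hXzero i hi)).symm
  have eY : ∑ i, Y i ^ s = ∑ i ∈ S, Y i ^ s :=
    (Finset.sum_subset (Finset.subset_univ S) (fun i _ hi => hYzero i hi)).symm
  rw [eX, eY]
  calc (∑ i ∈ S, X i ^ r) ^ (1 / r) * (∑ i ∈ S, Y i ^ s) ^ (1 / s)
      ≤ ∑ i ∈ S, X i * Y i := rev_holder S r s hr hr0 hs X Y hXpos hYpos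
    _ ≤ ∑ i ∈ S, ∑ j, x i j * y i j := by
        apply Finset.sum_le_sum
        intro i hi
        exact rev_holder Finset.univ (rr i) (ss i) (hrr i) (hrr0 i) (hss i)
          (x i) (y i) (fun j _ => hx i j) (fun j _ => hy i j)
    _ ≤ ∑ i, ∑ j, x i j * y i j := by
        apply Finset.sum_le_sum_of_subset_of_nonneg (Finset.subset_univ S)
        intro i _ _
        exact Finset.sum_nonneg fun j _ => (mul_pos (hx i j) (hy i j)).le
end

section
/- Let $r_1,\ldots,r_m$ be reals with $r_i < 1$, $r_i \neq 0$, $s_i = r_i/(r_i-1)$, and let $\theta$ be a positive weight vector summing to 1. For vectors $x_i, y_i \in \mathbb{R}^{n_i}$ with positive entries, define $X_i = \|x_i\|_{r_i}$, $Y_i = \|y_i\|_{s_i}$. Then $\sum_{i=1}^m x_i \cdot y_i \geq \prod_{i=1}^m X_i^{\theta_i} \cdot \prod_{i=1}^m (Y_i/\theta_i)^{\theta_i}$. -/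
open Finset

private lemma rev_holder_pos_s6 {n : ℕ} {r : ℝ} (hr0 : 0 < r) (hr1 : r < 1)
    (x y : Fin n → ℝ) (hx : ∀ j, 0 < x j) (hy : ∀ j, 0 < y j) :
    (∑ j, x j ^ r) ^ (1 / r) * (∑ j, y j ^ (r / (r - 1))) ^ (1 / (r / (r - 1)))
      ≤ ∑ j, x j * y j := by
  rcases isEmpty_or_nonempty (Fin n) with hE | hE
  · simp only [univ_eq_empty, sum_empty]
    rw [Real.zero_rpow (one_div_ne_zero hr0.ne'), zero_mul]
  have hr0' : r ≠ 0 := hr0.ne'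
  have hr1' : r - 1 ≠ 0 := by linarith
  set s : ℝ := r / (r - 1) with hs
  have hS : 0 < ∑ j, x j * y j :=
    Finset.sum_pos (fun j _ => mul_pos (hx j) (hy j)) univ_nonempty
  have hB : 0 < ∑ j, y j ^ s :=
    Finset.sum_pos (fun j _ => Real.rpow_pos_of_pos (hy j) _) univ_nonempty
  have hpq : Real.HolderConjugate (1 / r) (1 / (1 - r)) := by
    refine Real.holderConjugate_iff.mpr ⟨?_, ?_⟩
    · rw [lt_div_iff₀ hr0]; linarith
    · rw [one_div, one_div, inv_inv, inv_inv]; ring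
  have key : (∑ j, x j ^ r) ≤ (∑ j, x j * y j) ^ r * (∑ j, y j ^ s) ^ (1 - r) := by
    have H := Real.inner_le_Lp_mul_Lq_of_nonneg (univ : Finset (Fin n))
      (f := fun j => (x j * y j) ^ r) (g := fun j => y j ^ (-r)) hpq
      (fun j _ => (Real.rpow_pos_of_pos (mul_pos (hx j) (hy j)) _).le)
      (fun j _ => (Real.rpow_pos_of_pos (hy j) _).le)
    have e1 : ∀ j : Fin n, (x j * y j) ^ r * y j ^ (-r) = x j ^ r := by
      intro j
      rw [Real.mul_rpow (hx j).le (hy j).le, mul_assoc, ← Real.rpow_add (hy j)]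
      simp
    have e2 : ∀ j : Fin n, ((x j * y j) ^ r) ^ (1 / r) = x j * y j := by
      intro j
      rw [← Real.rpow_mul (mul_pos (hx j) (hy j)).le, mul_one_div_cancel hr0',
        Real.rpow_one]
    have e3 : ∀ j : Fin n, (y j ^ (-r)) ^ (1 / (1 - r)) = y j ^ s := by
      intro j
      rw [← Real.rpow_mul (hy j).le, hs]
      congr 1
      have h1r : (1 : ℝ) - r ≠ 0 := by intro h; apply hr1'; linarith
      field_simp
      ring
    have h1 : (1 : ℝ) / (1 / r) = r := one_div_one_div r
    have h2 : (1 : ℝ) / (1 / (1 - r)) = 1 - r := one_div_one_div _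
    simp only [e1, e2, e3, h1, h2] at H
    exact H
  have hinv : (1 : ℝ) / s = (r - 1) / r := by rw [hs, one_div_div]
  calc (∑ j, x j ^ r) ^ (1 / r) * (∑ j, y j ^ s) ^ (1 / s)
      ≤ ((∑ j, x j * y j) ^ r * (∑ j, y j ^ s) ^ (1 - r)) ^ (1 / r)
          * (∑ j, y j ^ s) ^ (1 / s) := by
        have h := Real.rpow_le_rpow
          (Finset.sum_nonneg fun j _ => (Real.rpow_pos_of_pos (hx j) _).le) key
          (by positivity : (0:ℝ) ≤ 1 / r)
        exact mul_le_mul_of_nonneg_right h (Real.rpow_nonneg hB.le _)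
    _ = ∑ j, x j * y j := by
        rw [Real.mul_rpow (Real.rpow_nonneg hS.le _) (Real.rpow_nonneg hB.le _),
          ← Real.rpow_mul hS.le, mul_one_div_cancel hr0', Real.rpow_one,
          ← Real.rpow_mul hB.le, mul_assoc, ← Real.rpow_add hB, hinv]
        have : (1 - r) * (1 / r) + (r - 1) / r = 0 := by field_simp; ring
        rw [this, Real.rpow_zero, mul_one]

private lemma rev_holder_s6 {n : ℕ} {r : ℝ} (hr1 : r < 1) (hr0 : r ≠ 0)
    (x y : Fin n → ℝ) (hx : ∀ j, 0 < x j) (hy : ∀ j, 0 < y j) :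
    (∑ j, x j ^ r) ^ (1 / r) * (∑ j, y j ^ (r / (r - 1))) ^ (1 / (r / (r - 1)))
      ≤ ∑ j, x j * y j := by
  rcases lt_or_gt_of_ne hr0 with hneg | hpos
  · set s : ℝ := r / (r - 1) with hs
    have hr1' : r - 1 < 0 := by linarith
    have hs0 : 0 < s := div_pos_of_neg_of_neg hneg hr1'
    have hne : r - 1 ≠ 0 := hr1'.ne
    have hsub : s - 1 = 1 / (r - 1) := by
      rw [hs, div_sub_one hne]
      congr 1
      ring
    have hs1 : s < 1 := by
      have : 1 / (r - 1) < 0 := div_neg_of_pos_of_neg one_pos hr1'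
      linarith
    have hconj : s / (s - 1) = r := by
      rw [hsub, hs]; field_simp
    have H := rev_holder_pos_s6 hs0 hs1 y x hy hx
    rw [hconj] at H
    calc (∑ j, x j ^ r) ^ (1 / r) * (∑ j, y j ^ s) ^ (1 / s)
        = (∑ j, y j ^ s) ^ (1 / s) * (∑ j, x j ^ r) ^ (1 / r) := mul_comm _ _
      _ ≤ ∑ j, y j * x j := H
      _ = ∑ j, x j * y j := by simp_rw [mul_comm]
  · exact rev_holder_pos_s6 hpos hr1 x y hx hy

theorem holder_direct_sum_cobb_douglas (m : ℕ) (n : Fin m → ℕ) (rr : Fin m → ℝ)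
    (hrr : ∀ i, rr i < 1) (hrr0 : ∀ i, rr i ≠ 0)
    (ss : Fin m → ℝ) (hss : ∀ i, ss i = rr i / (rr i - 1))
    (θ : Fin m → ℝ) (hθ : ∀ i, 0 < θ i) (hθ1 : ∑ i, θ i = 1)
    (x y : (i : Fin m) → Fin (n i) → ℝ)
    (hx : ∀ i j, 0 < x i j) (hy : ∀ i j, 0 < y i j) :
    (∏ i, ((∑ j, x i j ^ rr i) ^ (1 / rr i)) ^ θ i) *
      ∏ i, (((∑ j, y i j ^ ss i) ^ (1 / ss i)) / θ i) ^ θ i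
      ≤ ∑ i, ∑ j, x i j * y i j := by
  set X : Fin m → ℝ := fun i => (∑ j, x i j ^ rr i) ^ (1 / rr i) with hX
  set Y : Fin m → ℝ := fun i => (∑ j, y i j ^ ss i) ^ (1 / ss i) with hY
  set S : Fin m → ℝ := fun i => ∑ j, x i j * y i j with hSdef
  have hX0 : ∀ i, 0 ≤ X i := fun i =>
    Real.rpow_nonneg (Finset.sum_nonneg fun j _ => (Real.rpow_pos_of_pos (hx i j) _).le) _
  have hY0 : ∀ i, 0 ≤ Y i := fun i =>
    Real.rpow_nonneg (Finset.sum_nonneg fun j _ => (Real.rpow_pos_of_pos (hy i j) _).le) _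
  have hXY : ∀ i, X i * Y i ≤ S i := by
    intro i
    have h := rev_holder_s6 (hrr i) (hrr0 i) (x i) (y i) (hx i) (hy i)
    simp only [hX, hY, hSdef, hss i]
    exact h
  calc (∏ i, X i ^ θ i) * ∏ i, (Y i / θ i) ^ θ i
      = ∏ i, (X i * (Y i / θ i)) ^ θ i := by
        rw [← Finset.prod_mul_distrib]
        exact Finset.prod_congr rfl fun i _ =>
          (Real.mul_rpow (hX0 i) (div_nonneg (hY0 i) (hθ i).le)).symm
    _ ≤ ∏ i, (S i / θ i) ^ θ i := by
        apply Finset.prod_le_prod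
        · intro i _
          exact Real.rpow_nonneg (mul_nonneg (hX0 i) (div_nonneg (hY0 i) (hθ i).le)) _
        · intro i _
          refine Real.rpow_le_rpow
            (mul_nonneg (hX0 i) (div_nonneg (hY0 i) (hθ i).le)) ?_ (hθ i).le
          rw [mul_div_assoc']
          exact (div_le_div_iff_of_pos_right (hθ i)).mpr (hXY i)
    _ ≤ ∑ i, θ i * (S i / θ i) :=
        Real.geom_mean_le_arith_mean_weighted univ θ (fun i => S i / θ i)
          (fun i _ => (hθ i).le) hθ1
          (fun i _ => div_nonneg (Finset.sum_nonneg fun j _ =>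
            (mul_pos (hx i j) (hy i j)).le) (hθ i).le)
    _ = ∑ i, S i := by
        refine Finset.sum_congr rfl fun i _ => ?_
        rw [mul_comm, div_mul_cancel₀ _ (hθ i).ne']
end

section
/- Let $r < 1$, $r \neq 0$, $s = r/(r-1)$, $m > 0$, and $p \in \mathbb{R}^n$ with positive entries. Then the maximum of $(\sum_i x_i^r)^{1/r}$ over positive vectors $x$ with $\sum_i p_i x_i \leq m$ equals $m (\sum_i p_i^s)^{-1/s}$, attained at $x_i = m\, p_i^{s-1} / \sum_j p_j^s$. -/
open Finset

theorem ces_utility_max (n : ℕ) (r s : ℝ) (hr : r < 1) (hr0 : r ≠ 0)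
    (hs : s = r / (r - 1)) (m : ℝ) (hm : 0 < m)
    (p : Fin n → ℝ) (hp : ∀ i, 0 < p i) :
    IsGreatest {v : ℝ | ∃ x : Fin n → ℝ, (∀ i, 0 < x i) ∧
        (∑ i, p i * x i) ≤ m ∧ v = (∑ i, x i ^ r) ^ (1 / r)}
      (m * (∑ i, p i ^ s) ^ (-(1 / s))) ∧
    (∑ i, (m * p i ^ (s - 1) / ∑ j, p j ^ s) ^ r) ^ (1 / r) =
      m * (∑ i, p i ^ s) ^ (-(1 / s)) := by
  have hr1 : r - 1 < 0 := by linarith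
  have hr1ne : r - 1 ≠ 0 := ne_of_lt hr1
  have h1r : (0:ℝ) < 1 - r := by linarith
  have h1rne : (1:ℝ) - r ≠ 0 := ne_of_gt h1r
  have hs0 : s ≠ 0 := by rw [hs]; exact div_ne_zero hr0 hr1ne
  have e2 : (1 - r) / r = -(1 / s) := by rw [hs]; field_simp; ring
  rcases Nat.eq_zero_or_pos n with hn | hn
  · subst hn
    have h0r : (0:ℝ) ^ (1 / r) = 0 := Real.zero_rpow (one_div_ne_zero hr0)
    have h0s : (0:ℝ) ^ (-(1 / s)) = 0 := Real.zero_rpow (neg_ne_zero.mpr (one_div_ne_zero hs0))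
    simp only [Finset.univ_eq_empty, Finset.sum_empty]
    refine ⟨⟨⟨fun _ => 1, fun i => i.elim0, by simpa using hm.le, by rw [h0r, h0s, mul_zero]⟩,
      ?_⟩, by rw [h0r, h0s, mul_zero]⟩
    rintro v ⟨x, -, -, rfl⟩
    rw [h0r, h0s, mul_zero]
  -- main case : n > 0
  have : Nonempty (Fin n) := Fin.pos_iff_nonempty.mp hn
  have hne : (univ : Finset (Fin n)).Nonempty := univ_nonempty
  have hP : 0 < ∑ i, p i ^ s := sum_pos (fun i _ => Real.rpow_pos_of_pos (hp i) s) hne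
  have e1 : (s - 1) * r = s := by rw [hs]; field_simp; ring
  -- the candidate point
  have hxpos : ∀ i, 0 < m * p i ^ (s - 1) / ∑ j, p j ^ s :=
    fun i => div_pos (mul_pos hm (Real.rpow_pos_of_pos (hp i) _)) hP
  have hxr : ∀ i, (m * p i ^ (s - 1) / ∑ j, p j ^ s) ^ r
      = m ^ r * p i ^ s * ((∑ j, p j ^ s) ^ r)⁻¹ := by
    intro i
    rw [Real.div_rpow (mul_pos hm (Real.rpow_pos_of_pos (hp i) _)).le hP.le,
      Real.mul_rpow hm.le (Real.rpow_pos_of_pos (hp i) _).le,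
      ← Real.rpow_mul (hp i).le, e1, div_eq_mul_inv]
  have hsum : ∑ i, (m * p i ^ (s - 1) / ∑ j, p j ^ s) ^ r
      = m ^ r * (∑ j, p j ^ s) ^ (1 - r) := by
    rw [Finset.sum_congr rfl (fun i _ => hxr i), ← Finset.sum_mul, ← Finset.mul_sum,
      mul_assoc]
    congr 1
    rw [← Real.rpow_neg hP.le, show (1:ℝ) - r = 1 + -r by ring, Real.rpow_add hP,
      Real.rpow_one]
  have heq : (∑ i, (m * p i ^ (s - 1) / ∑ j, p j ^ s) ^ r) ^ (1 / r)
      = m * (∑ i, p i ^ s) ^ (-(1 / s)) := by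
    rw [hsum, Real.mul_rpow (Real.rpow_nonneg hm.le _) (Real.rpow_nonneg hP.le _),
      ← Real.rpow_mul hm.le,
      mul_one_div, div_self hr0, Real.rpow_one, ← Real.rpow_mul hP.le, mul_one_div, e2]
  have hps1 : ∀ i, p i * p i ^ (s - 1) = p i ^ s := by
    intro i
    have h := Real.rpow_add (hp i) 1 (s - 1)
    rw [Real.rpow_one] at h
    rw [← h, show (1:ℝ) + (s - 1) = s by ring]
  have hbudget : ∑ i, p i * (m * p i ^ (s - 1) / ∑ j, p j ^ s) = m := by
    have : ∀ i, p i * (m * p i ^ (s - 1) / ∑ j, p j ^ s)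
        = m * p i ^ s / ∑ j, p j ^ s := by
      intro i
      rw [← hps1 i]; ring
    rw [Finset.sum_congr rfl (fun i _ => this i), ← Finset.sum_div, ← Finset.mul_sum,
      mul_div_assoc, div_self hP.ne', mul_one]
  -- Upper bound
  have hub : ∀ v ∈ {v : ℝ | ∃ x : Fin n → ℝ, (∀ i, 0 < x i) ∧
      (∑ i, p i * x i) ≤ m ∧ v = (∑ i, x i ^ r) ^ (1 / r)},
      v ≤ m * (∑ i, p i ^ s) ^ (-(1 / s)) := by
    rintro v ⟨x, hx, hb, rfl⟩
    have hA : 0 < ∑ i, p i * x i := sum_pos (fun i _ => mul_pos (hp i) (hx i)) hne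
    have hB : 0 < ∑ i, x i ^ r := sum_pos (fun i _ => Real.rpow_pos_of_pos (hx i) r) hne
    have main : (∑ i, x i ^ r) ^ (1 / r)
        ≤ (∑ i, p i * x i) * (∑ i, p i ^ s) ^ (-(1 / s)) := by
      rcases lt_or_gt_of_ne hr0 with hrneg | hrpos
      · -- r < 0, so 0 < s < 1
        have hspos : 0 < s := by
          rw [hs]; exact div_pos_of_neg_of_neg hrneg hr1
        have hs1 : s < 1 := by
          have hd : s - 1 = 1 / (r - 1) := by rw [hs]; field_simp; ring
          have : 1 / (r - 1) < 0 := one_div_neg.mpr hr1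
          linarith
        have h1s : (0:ℝ) < 1 - s := by linarith
        have hconj : Real.HolderConjugate (1 / s) (1 / (1 - s)) := by
          rw [Real.holderConjugate_iff]; constructor
          · rw [lt_div_iff₀ hspos]; linarith
          · simp only [one_div, inv_inv]; ring
        have key := Real.inner_le_Lp_mul_Lq_of_nonneg (univ : Finset (Fin n)) hconj
          (f := fun i => (p i * x i) ^ s) (g := fun i => (x i) ^ (-s))
          (fun i _ => Real.rpow_nonneg (mul_pos (hp i) (hx i)).le _)
          (fun i _ => Real.rpow_nonneg (hx i).le _)
        have l1 : ∀ i, (p i * x i) ^ s * (x i) ^ (-s) = p i ^ s := by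
          intro i
          rw [Real.mul_rpow (hp i).le (hx i).le, Real.rpow_neg (hx i).le, mul_assoc,
            mul_inv_cancel₀ (ne_of_gt (Real.rpow_pos_of_pos (hx i) s)), mul_one]
        have l2 : ∀ i, ((p i * x i) ^ s) ^ (1 / s) = p i * x i := by
          intro i
          rw [← Real.rpow_mul (mul_pos (hp i) (hx i)).le, mul_one_div, div_self hs0,
            Real.rpow_one]
        have l3 : ∀ i, ((x i) ^ (-s)) ^ (1 / (1 - s)) = x i ^ r := by
          intro i
          rw [← Real.rpow_mul (hx i).le]
          congr 1
          rw [mul_one_div, div_eq_iff (ne_of_gt h1s), hs]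
          field_simp
          ring
        simp only [l1, l2, l3, one_div_one_div] at key
        -- key : ∑ p^s ≤ (∑ p x) ^ s * (∑ x^r) ^ (1-s)
        have e3 : (1 - s) * (1 / s) = -(1 / r) := by
          rw [mul_one_div, hs]; field_simp; ring
        have step1 : (∑ i, p i ^ s) ^ (1 / s)
            ≤ (∑ i, p i * x i) * (∑ i, x i ^ r) ^ (-(1 / r)) := by
          have h := Real.rpow_le_rpow hP.le key (by positivity : (0:ℝ) ≤ 1 / s)
          rwa [Real.mul_rpow (Real.rpow_nonneg hA.le _) (Real.rpow_nonneg hB.le _),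
            ← Real.rpow_mul hA.le, mul_one_div, div_self hs0, Real.rpow_one,
            ← Real.rpow_mul hB.le, e3] at h
        rw [Real.rpow_neg hB.le, ← div_eq_mul_inv] at step1
        have h3 := (le_div_iff₀ (Real.rpow_pos_of_pos hB (1 / r))).mp step1
        rw [Real.rpow_neg hP.le, ← div_eq_mul_inv, le_div_iff₀ (Real.rpow_pos_of_pos hP (1 / s))]
        linarith [h3]
      · -- 0 < r < 1
        have hconj : Real.HolderConjugate (1 / r) (1 / (1 - r)) := by
          rw [Real.holderConjugate_iff]; constructor
          · rw [lt_div_iff₀ hrpos]; linarith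
          · simp only [one_div, inv_inv]; ring
        have key := Real.inner_le_Lp_mul_Lq_of_nonneg (univ : Finset (Fin n)) hconj
          (f := fun i => (p i * x i) ^ r) (g := fun i => (p i) ^ (-r))
          (fun i _ => Real.rpow_nonneg (mul_pos (hp i) (hx i)).le _)
          (fun i _ => Real.rpow_nonneg (hp i).le _)
        have l1 : ∀ i, (p i * x i) ^ r * (p i) ^ (-r) = x i ^ r := by
          intro i
          rw [Real.mul_rpow (hp i).le (hx i).le, Real.rpow_neg (hp i).le,
            mul_comm ((p i) ^ r) ((x i) ^ r), mul_assoc,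
            mul_inv_cancel₀ (ne_of_gt (Real.rpow_pos_of_pos (hp i) r)), mul_one]
        have l2 : ∀ i, ((p i * x i) ^ r) ^ (1 / r) = p i * x i := by
          intro i
          rw [← Real.rpow_mul (mul_pos (hp i) (hx i)).le, mul_one_div, div_self hr0,
            Real.rpow_one]
        have l3 : ∀ i, ((p i) ^ (-r)) ^ (1 / (1 - r)) = p i ^ s := by
          intro i
          rw [← Real.rpow_mul (hp i).le]
          congr 1
          rw [mul_one_div, hs, div_eq_div_iff h1rne hr1ne]
          ring
        simp only [l1, l2, l3, one_div_one_div] at key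
        -- key : ∑ x^r ≤ (∑ p x)^r * (∑ p^s)^(1-r)
        have h := Real.rpow_le_rpow hB.le key (by positivity : (0:ℝ) ≤ 1 / r)
        rwa [Real.mul_rpow (Real.rpow_nonneg hA.le _) (Real.rpow_nonneg hP.le _),
          ← Real.rpow_mul hA.le, mul_one_div, div_self hr0, Real.rpow_one,
          ← Real.rpow_mul hP.le, mul_one_div, e2] at h
    exact main.trans (mul_le_mul_of_nonneg_right hb (by positivity))
  exact ⟨⟨⟨fun i => m * p i ^ (s - 1) / ∑ j, p j ^ s, hxpos, le_of_eq hbudget, heq.symm⟩,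
    hub⟩, heq⟩
end
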